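/- Let H be an undirected graph on n vertices with girth strictly greater than 2 log₂ n. Then H has at most 4n edges. -/

import Mathlib

open Finset
open SimpleGraph Walk

lemma exists_cycle_of_two_paths {V : Type*} {G : SimpleGraph V} {u w : V} (p q : G.Walk u w)
    (hp : p.IsPath) (hq : q.IsPath) (hne : p ≠ q) :
    ∃ (x : V) (c : G.Walk x x), c.IsCycle ∧ c.length ≤ p.length + q.length := by
  classical
  set s : Set (Sym2 V) := {e | e ∈ p.edges ∨ e ∈ q.edges} with hs
  set G' : SimpleGraph V := SimpleGraph.fromEdgeSet s with hG'
  have hle : G' ≤ G := by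
    intro a b hab
    rw [hG', SimpleGraph.fromEdgeSet_adj] at hab
    rcases hab.1 with he | he
    · exact (SimpleGraph.mem_edgeSet _).mp (p.edges_subset_edgeSet he)
    · exact (SimpleGraph.mem_edgeSet _).mp (q.edges_subset_edgeSet he)
  have hsubp : ∀ e ∈ p.edges, e ∈ G'.edgeSet := by
    intro e he
    rw [hG', SimpleGraph.edgeSet_fromEdgeSet]
    exact ⟨Or.inl he, G.not_isDiag_of_mem_edgeSet (p.edges_subset_edgeSet he)⟩
  have hsubq : ∀ e ∈ q.edges, e ∈ G'.edgeSet := by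
    intro e he
    rw [hG', SimpleGraph.edgeSet_fromEdgeSet]
    exact ⟨Or.inr he, G.not_isDiag_of_mem_edgeSet (q.edges_subset_edgeSet he)⟩
  have hp' : (p.transfer G' hsubp).IsPath := hp.transfer _
  have hq' : (q.transfer G' hsubq).IsPath := hq.transfer _
  have hne' : p.transfer G' hsubp ≠ q.transfer G' hsubq := by
    intro h
    apply hne
    have := congrArg (fun r : G'.Walk u w =>
      r.transfer G (fun e he => (SimpleGraph.edgeSet_mono hle) (r.edges_subset_edgeSet he))) h
    simpa [Walk.transfer_transfer, Walk.transfer_self] using this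
  have hnA : ¬ G'.IsAcyclic := by
    intro hA
    have := hA.path_unique ⟨_, hp'⟩ ⟨_, hq'⟩
    exact hne' (congrArg Subtype.val this)
  obtain ⟨a, c, hc, -⟩ := (SimpleGraph.exists_girth_eq_length).mpr hnA
  have hfin : G'.edgeSet.Finite := by
    apply Set.Finite.subset ((p.edges ++ q.edges).toFinset.finite_toSet)
    intro e he
    rw [hG', SimpleGraph.edgeSet_fromEdgeSet] at he
    simp only [List.coe_toFinset, List.mem_append, Set.mem_setOf_eq]
    exact he.1
  haveI : Fintype G'.edgeSet := hfin.fintype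
  have hlen : c.length ≤ p.length + q.length := by
    have h1 : c.length ≤ G'.edgeFinset.card := hc.isTrail.length_le_card_edgeFinset
    have h2 : G'.edgeFinset ⊆ (p.edges ++ q.edges).toFinset := by
      intro e he
      rw [SimpleGraph.mem_edgeFinset, hG', SimpleGraph.edgeSet_fromEdgeSet] at he
      simpa [hs] using he.1
    have h2' := Finset.card_le_card h2
    have h3 : (p.edges ++ q.edges).toFinset.card ≤ p.length + q.length := by
      calc (p.edges ++ q.edges).toFinset.card ≤ (p.edges ++ q.edges).length :=
        (p.edges ++ q.edges).toFinset_card_le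
      _ = p.length + q.length := by simp [Walk.length_edges]
    omega
  exact ⟨a, c.mapLe hle, hc.mapLe hle, by simpa using hlen⟩

lemma exists_min_deg_five {V : Type*} [Fintype V] [DecidableEq V] (H : SimpleGraph V)
    [DecidableRel H.Adj] (hm : 4 * Fintype.card V < H.edgeFinset.card) :
    ∃ S : Finset V, S.Nonempty ∧ ∀ v ∈ S, 5 ≤ (S.filter (H.Adj v)).card := by
  set f : Finset V → ℕ := fun s => ∑ u ∈ s, (s.filter (H.Adj u)).card with hf
  have hPuniv : 8 * (univ : Finset V).card < f univ := by
    have h1 : f univ = ∑ u, H.degree u := by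
      apply Finset.sum_congr rfl
      intro u _
      congr 1
      ext x
      simp [SimpleGraph.mem_neighborFinset, SimpleGraph.degree]
    rw [hf] at h1 ⊢
    rw [h1, SimpleGraph.sum_degrees_eq_twice_card_edges]
    simp only [Finset.card_univ]
    omega
  obtain ⟨S, hSmem, hmin⟩ := Finset.exists_min_image
    (univ.filter fun s : Finset V => 8 * s.card < f s) Finset.card
    ⟨univ, by simp only [mem_filter, mem_univ, true_and]; exact hPuniv⟩
  rw [mem_filter] at hSmem
  have hPS : 8 * S.card < f S := hSmem.2
  have hSne : S.Nonempty := by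
    rcases S.eq_empty_or_nonempty with rfl | h
    · simp [hf] at hPS
    · exact h
  refine ⟨S, hSne, ?_⟩
  intro v hv
  by_contra hlt
  push_neg at hlt
  have hd : (S.filter (H.Adj v)).card ≤ 4 := by omega
  set S' := S.erase v with hS'
  -- split the sum
  have split : (S.filter (H.Adj v)).card + ∑ u ∈ S', (S.filter (H.Adj u)).card = f S :=
    Finset.add_sum_erase S (fun u => (S.filter (H.Adj u)).card) hv
  have e2 : ∀ u ∈ S', (S.filter (H.Adj u)).card
      = (S'.filter (H.Adj u)).card + (if H.Adj u v then 1 else 0) := by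
    intro u _
    rw [hS', Finset.filter_erase]
    by_cases h : H.Adj u v
    · have hvmem : v ∈ S.filter (H.Adj u) := mem_filter.mpr ⟨hv, h⟩
      rw [Finset.card_erase_of_mem hvmem, if_pos h]
      have : 1 ≤ (S.filter (H.Adj u)).card := Finset.card_pos.mpr ⟨v, hvmem⟩
      omega
    · rw [Finset.erase_eq_of_notMem (fun hmem => h (mem_filter.mp hmem).2), if_neg h]
      omega
  have e2' : ∑ u ∈ S', (S.filter (H.Adj u)).card
      = f S' + ∑ u ∈ S', (if H.Adj u v then 1 else 0) := by
    rw [hf, ← Finset.sum_add_distrib]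
    exact Finset.sum_congr rfl e2
  have e3 : ∑ u ∈ S', (if H.Adj u v then 1 else 0) ≤ 4 := by
    have hb : ∑ u ∈ S', (if H.Adj u v then 1 else 0) = (S'.filter (fun u => H.Adj u v)).card := by
      rw [Finset.card_filter]
    rw [hb]
    refine le_trans (Finset.card_le_card ?_) hd
    intro u hu
    rw [mem_filter] at hu ⊢
    exact ⟨(Finset.erase_subset _ _) hu.1, hu.2.symm⟩
  have hcard' : S'.card + 1 = S.card := by
    rw [hS', Finset.card_erase_of_mem hv]
    have := Finset.card_pos.mpr ⟨v, hv⟩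
    omega
  have hPS' : 8 * S'.card < f S' := by omega
  have := hmin S' (mem_filter.mpr ⟨mem_univ _, hPS'⟩)
  omega
open Finset


lemma sigma_concat_inj {V : Type*} {G : SimpleGraph V} {v u₁ u₂ x₁ x₂ : V}
    {w₁ : G.Walk v u₁} {w₂ : G.Walk v u₂} {h₁ : G.Adj u₁ x₁} {h₂ : G.Adj u₂ x₂}
    (h : (⟨x₁, w₁.concat h₁⟩ : Σ u : V, G.Walk v u) = ⟨x₂, w₂.concat h₂⟩) :
    (⟨u₁, w₁⟩ : Σ u : V, G.Walk v u) = ⟨u₂, w₂⟩ := by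
  obtain ⟨hx, hw⟩ := Sigma.mk.inj_iff.mp h
  subst hx
  have hw' := eq_of_heq hw
  obtain ⟨hu, hcopy⟩ := SimpleGraph.Walk.concat_inj hw'
  subst hu
  simp only [SimpleGraph.Walk.copy_rfl_rfl] at hcopy
  subst hcopy
  rfl

section Tsets
variable {V : Type*} [DecidableEq V]

def Tset (H : SimpleGraph V) [DecidableRel H.Adj] (S : Finset V) (v : V) :
    ℕ → Finset (Σ u : V, H.Walk v u)
  | 0 => {⟨v, SimpleGraph.Walk.nil⟩}
  | (j+1) => (Tset H S v j).biUnion (fun t =>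
      ((S.filter (fun x => H.Adj t.1 x ∧ x ∉ t.2.support)).attach.image
        (fun x => ⟨x.1, t.2.concat (Finset.mem_filter.mp x.2).2.1⟩)))

lemma Tset_spec (H : SimpleGraph V) [DecidableRel H.Adj] (S : Finset V) {v : V} (hv : v ∈ S) :
    ∀ j, ∀ t ∈ Tset H S v j, t.2.IsPath ∧ t.2.length = j ∧ ∀ x ∈ t.2.support, x ∈ S := by
  intro j
  induction j with
  | zero =>
    intro t ht
    simp only [Tset, Finset.mem_singleton] at ht
    subst ht
    refine ⟨SimpleGraph.Walk.IsPath.nil, rfl, ?_⟩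
    intro x hx
    simp only [SimpleGraph.Walk.support_nil, List.mem_singleton] at hx
    subst hx; exact hv
  | succ j ih =>
    intro t ht
    simp only [Tset, Finset.mem_biUnion, Finset.mem_image, Finset.mem_attach, true_and] at ht
    obtain ⟨t', ht', x, rfl⟩ := ht
    obtain ⟨hpath, hlen, hsupp⟩ := ih t' ht'
    obtain ⟨hxS, hadj, hxnot⟩ := Finset.mem_filter.mp x.2
    refine ⟨?_, ?_, ?_⟩
    · rw [SimpleGraph.Walk.isPath_def, SimpleGraph.Walk.support_concat,
        List.nodup_append']
      exact ⟨hpath.support_nodup, List.nodup_singleton _,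
        by simpa using fun h => hxnot h⟩
    · simp [SimpleGraph.Walk.length_concat, hlen]
    · intro y hy
      rw [SimpleGraph.Walk.support_concat, List.mem_append] at hy
      rcases hy with hy | hy
      · exact hsupp y hy
      · simp only [List.mem_singleton] at hy; subst hy; exact hxS

end Tsets

/-- An undirected graph on `n ≥ 2` vertices with girth strictly greater than `2 log₂ n`
(every cycle has length `> 2 log₂ n`) has at most `4n` edges. -/
theorem stmt_3 {V : Type*} [Fintype V] (H : SimpleGraph V) [DecidableRel H.Adj]
    (hn : 2 ≤ Fintype.card V)
    (hgirth : ∀ (v : V) (c : H.Walk v v), c.IsCycle →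
      2 * Real.logb 2 (Fintype.card V) < (c.length : ℝ)) :
    H.edgeFinset.card ≤ 4 * Fintype.card V := by
  classical
  by_contra hcon
  push_neg at hcon
  obtain ⟨S, hSne, hdeg⟩ := exists_min_deg_five H hcon
  set n := Fintype.card V with hn'
  set k := Nat.log 2 n with hk
  have hk1 : 1 ≤ k := Nat.log_pos one_lt_two hn
  have noSmall : ∀ (x : V) (c : H.Walk x x), c.IsCycle → c.length ≤ 2 * k → False := by
    intro x c hc hlenc
    have h1 := hgirth x c hc
    have h2 : (k : ℝ) ≤ Real.logb 2 n := by
      have hpow : (2:ℝ)^k ≤ (n:ℝ) := by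
        exact_mod_cast Nat.pow_log_le_self 2 (by omega)
      calc (k:ℝ) = Real.logb 2 ((2:ℝ)^k) := by
            simp [Real.logb_pow, Real.logb_self_eq_one]
        _ ≤ Real.logb 2 (n:ℝ) := Real.logb_le_logb_of_le (by norm_num) (by positivity) hpow
    have h3 : (c.length : ℝ) ≤ 2 * (k:ℝ) := by exact_mod_cast hlenc
    linarith
  obtain ⟨v, hvS⟩ := hSne
  set T := Tset H S v with hT
  -- growth of the path sets
  have hgrow : ∀ j, j + 1 ≤ k → 4 * (T j).card ≤ (T (j+1)).card := by
    intro j hj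
    have hTeq : T (j+1) = (T j).biUnion (fun t =>
        ((S.filter (fun x => H.Adj t.1 x ∧ x ∉ t.2.support)).attach.image
          (fun x => ⟨x.1, t.2.concat (Finset.mem_filter.mp x.2).2.1⟩))) := rfl
    have hdisj : ∀ t₁ ∈ T j, ∀ t₂ ∈ T j, t₁ ≠ t₂ →
        Disjoint ((S.filter (fun x => H.Adj t₁.1 x ∧ x ∉ t₁.2.support)).attach.image
          (fun x => ⟨x.1, t₁.2.concat (Finset.mem_filter.mp x.2).2.1⟩))
          ((S.filter (fun x => H.Adj t₂.1 x ∧ x ∉ t₂.2.support)).attach.image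
          (fun x => (⟨x.1, t₂.2.concat (Finset.mem_filter.mp x.2).2.1⟩ : Σ u : V, H.Walk v u))) := by
      intro t₁ h₁ t₂ h₂ hne
      rw [Finset.disjoint_left]
      rintro a ha₁ ha₂
      simp only [Finset.mem_image, Finset.mem_attach, true_and] at ha₁ ha₂
      obtain ⟨x₁, rfl⟩ := ha₁
      obtain ⟨x₂, heq⟩ := ha₂
      exact hne (sigma_concat_inj heq).symm
    rw [hTeq, Finset.card_biUnion hdisj]
    have hbound : ∀ t ∈ T j, 4 ≤
        ((S.filter (fun x => H.Adj t.1 x ∧ x ∉ t.2.support)).attach.image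
          (fun x => (⟨x.1, t.2.concat (Finset.mem_filter.mp x.2).2.1⟩ : Σ u : V, H.Walk v u))).card := by
      intro t ht
      obtain ⟨hpath, hlen, hsupp⟩ := Tset_spec H S hvS j t ht
      have huS : t.1 ∈ S := hsupp _ (SimpleGraph.Walk.end_mem_support _)
      have hB : 5 ≤ (S.filter (H.Adj t.1)).card := hdeg _ huS
      have hbad : (S.filter (fun x => H.Adj t.1 x ∧ x ∈ t.2.support)).card ≤ 1 := by
        rw [Finset.card_le_one]
        have key : ∀ x ∈ S.filter (fun x => H.Adj t.1 x ∧ x ∈ t.2.support),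
            x = t.2.getVert (j - 1) := by
          intro x hx
          rw [Finset.mem_filter] at hx
          obtain ⟨hxS, hadj, hxsupp⟩ := hx
          have hdpath : (t.2.dropUntil x hxsupp).IsPath := hpath.dropUntil hxsupp
          have hdlen : (t.2.dropUntil x hxsupp).length ≤ j :=
            hlen ▸ SimpleGraph.Walk.length_dropUntil_le t.2 hxsupp
          have hsing : (SimpleGraph.Walk.cons hadj.symm SimpleGraph.Walk.nil :
              H.Walk x t.1).IsPath := (SimpleGraph.Path.singleton hadj.symm).2
          by_cases hde : t.2.dropUntil x hxsupp
              = SimpleGraph.Walk.cons hadj.symm SimpleGraph.Walk.nil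
          · have hdl1 : (t.2.dropUntil x hxsupp).length = 1 := by rw [hde]; rfl
            have hspec := SimpleGraph.Walk.take_spec t.2 hxsupp
            have hlt : (t.2.takeUntil x hxsupp).length + 1 = j := by
              have := congrArg SimpleGraph.Walk.length hspec
              rw [SimpleGraph.Walk.length_append, hdl1, hlen] at this
              exact this
            have hgv : t.2.getVert (j - 1) = x := by
              conv_lhs => rw [← hspec]
              rw [SimpleGraph.Walk.getVert_append]
              have hj1 : j - 1 = (t.2.takeUntil x hxsupp).length := by omega
              rw [if_neg (by omega), hj1, Nat.sub_self, SimpleGraph.Walk.getVert_zero]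
            exact hgv.symm
          · obtain ⟨y, c, hc, hclen⟩ := exists_cycle_of_two_paths _ _ hdpath hsing hde
            exact (noSmall y c hc (by
              simp only [SimpleGraph.Walk.length_cons, SimpleGraph.Walk.length_nil] at hclen
              omega)).elim
        intro a ha b hb
        rw [key a ha, key b hb]
      have hsplit : (S.filter (H.Adj t.1)).card ≤
          (S.filter (fun x => H.Adj t.1 x ∧ x ∉ t.2.support)).card +
          (S.filter (fun x => H.Adj t.1 x ∧ x ∈ t.2.support)).card := by
        have hsub : S.filter (H.Adj t.1) ⊆
            (S.filter (fun x => H.Adj t.1 x ∧ x ∉ t.2.support)) ∪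
            (S.filter (fun x => H.Adj t.1 x ∧ x ∈ t.2.support)) := by
          intro x hx
          rw [Finset.mem_filter] at hx
          by_cases h : x ∈ t.2.support <;>
            simp [Finset.mem_union, Finset.mem_filter, hx.1, hx.2, h]
        exact le_trans (Finset.card_le_card hsub) (Finset.card_union_le _ _)
      have hinj : Function.Injective
          (fun x : {x // x ∈ S.filter (fun x => H.Adj t.1 x ∧ x ∉ t.2.support)} =>
            (⟨x.1, t.2.concat (Finset.mem_filter.mp x.2).2.1⟩ : Σ u : V, H.Walk v u)) := by
        intro x₁ x₂ h
        apply Subtype.ext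
        exact congrArg Sigma.fst h
      rw [Finset.card_image_of_injective _ hinj, Finset.card_attach]
      omega
    calc 4 * (T j).card = ∑ _t ∈ T j, 4 := by rw [Finset.sum_const, smul_eq_mul, Nat.mul_comm]
      _ ≤ _ := Finset.sum_le_sum hbound
  -- 4^j ≤ card (T j)
  have hpow : ∀ j, j ≤ k → 4^j ≤ (T j).card := by
    intro j
    induction j with
    | zero => intro _; simp [hT, Tset]
    | succ j ih =>
      intro hj
      have h1 := ih (by omega)
      have h2 := hgrow j hj
      calc 4^(j+1) = 4 * 4^j := by ring
        _ ≤ 4 * (T j).card := by omega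
        _ ≤ (T (j+1)).card := h2
  -- endpoints are distinct, embed into S
  have hcard : (T k).card ≤ S.card := by
    apply Finset.card_le_card_of_injOn (fun t => t.1)
    · intro t ht
      obtain ⟨hpath, hlen, hsupp⟩ := Tset_spec H S hvS k t ht
      exact hsupp _ (SimpleGraph.Walk.end_mem_support _)
    · intro t₁ h₁ t₂ h₂ hfst
      obtain ⟨hpath₁, hlen₁, -⟩ := Tset_spec H S hvS k t₁ h₁
      obtain ⟨hpath₂, hlen₂, -⟩ := Tset_spec H S hvS k t₂ h₂
      obtain ⟨u₁, w₁⟩ := t₁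
      obtain ⟨u₂, w₂⟩ := t₂
      simp only at hfst
      subst hfst
      by_cases hw : w₁ = w₂
      · rw [hw]
      · have hl1 : w₁.length = k := hlen₁
        have hl2 : w₂.length = k := hlen₂
        obtain ⟨y, c, hc, hclen⟩ := exists_cycle_of_two_paths _ _ hpath₁ hpath₂ hw
        exact (noSmall y c hc (by omega)).elim
  have hSn : S.card ≤ n := by
    rw [hn']
    exact le_trans (Finset.card_le_card (Finset.subset_univ S)) (by simp)
  have hfin1 : 4^k ≤ n := le_trans (hpow k le_rfl) (le_trans hcard hSn)
  have hfin2 : n < 2^(k+1) := Nat.lt_pow_succ_log_self (by norm_num) n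
  have hfin3 : (2:ℕ)^(k+1) ≤ 2^(2*k) := Nat.pow_le_pow_right (by norm_num) (by omega)
  have hfin4 : (2:ℕ)^(2*k) = 4^k := by
    rw [Nat.pow_mul]
  omega
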